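/- Let U ⊆ ℝ³ be open, F : U → ℝ twice continuously differentiable, p ∈ U with F_c(p) ≠ 0, and let λ₁, λ₂ : U → ℝ be functions differentiable at p with λ₁(p) ≠ λ₂(p) and satisfying F_a + F_b·λᵢ + F_c·λᵢ² = 0 on U for i = 1,2. Then the following are equivalent: (i) for both i = 1,2, the complete exceptionality condition (λᵢ)_a + λᵢ·(λᵢ)_b + λᵢ²·(λᵢ)_c = 0 holds at p; (ii) in the polynomial ring ℝ[X], the quadratic polynomial F_a(p) + F_b(p)·X + F_c(p)·X² divides the quartic polynomial F_aa(p) + 2·F_ab(p)·X + (2·F_ac(p) + F_bb(p))·X² + 2·F_bc(p)·X³ + F_cc(p)·X⁴. -/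

import Mathlib

/-- The partial derivative of `G : ℝ³ → ℝ` in the constant direction `v`. -/
noncomputable def pd (v : ℝ × ℝ × ℝ) (G : ℝ × ℝ × ℝ → ℝ) : ℝ × ℝ × ℝ → ℝ :=
  fun p => fderiv ℝ G p v

/-- Direction of the variable `a`. -/
def ea : ℝ × ℝ × ℝ := (1, 0, 0)
/-- Direction of the variable `b`. -/
def eb : ℝ × ℝ × ℝ := (0, 1, 0)
/-- Direction of the variable `c`. -/
def ec : ℝ × ℝ × ℝ := (0, 0, 1)

section aux
variable {U : Set (ℝ × ℝ × ℝ)} {F lam : ℝ × ℝ × ℝ → ℝ} {p : ℝ × ℝ × ℝ}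

private lemma fderiv_diffAt (hU : IsOpen U) (hp : p ∈ U) (hF : ContDiffOn ℝ 2 F U) :
    DifferentiableAt ℝ (fderiv ℝ F) p :=
  ((hF.contDiffAt (hU.mem_nhds hp)).fderiv_right (m := 1) (by norm_num)).differentiableAt (by simp)

private lemma pd_hasFDerivAt (hU : IsOpen U) (hp : p ∈ U) (hF : ContDiffOn ℝ 2 F U)
    (w : ℝ × ℝ × ℝ) :
    HasFDerivAt (pd w F)
      ((ContinuousLinearMap.apply ℝ ℝ w).comp (fderiv ℝ (fderiv ℝ F) p)) p :=
  ((ContinuousLinearMap.apply ℝ ℝ w).hasFDerivAt).comp p (fderiv_diffAt hU hp hF).hasFDerivAt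

private lemma pd2_eq (hU : IsOpen U) (hp : p ∈ U) (hF : ContDiffOn ℝ 2 F U) (v w : ℝ × ℝ × ℝ) :
    pd v (pd w F) p = fderiv ℝ (fderiv ℝ F) p v w := by
  have := (pd_hasFDerivAt hU hp hF w).fderiv
  show fderiv ℝ (pd w F) p v = _
  rw [this]; rfl

private lemma pd_symm (hU : IsOpen U) (hp : p ∈ U) (hF : ContDiffOn ℝ 2 F U) (v w : ℝ × ℝ × ℝ) :
    pd v (pd w F) p = pd w (pd v F) p := by
  rw [pd2_eq hU hp hF, pd2_eq hU hp hF]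
  apply second_derivative_symmetric_of_eventually (f := F) (f' := fderiv ℝ F)
  · filter_upwards [hU.mem_nhds hp] with y hy
    exact ((hF.contDiffAt (hU.mem_nhds hy)).differentiableAt (by norm_num)).hasFDerivAt
  · exact (fderiv_diffAt hU hp hF).hasFDerivAt

private lemma char_deriv (hU : IsOpen U) (hp : p ∈ U) (hF : ContDiffOn ℝ 2 F U)
    (hlam : DifferentiableAt ℝ lam p)
    (hchar : ∀ q ∈ U, pd ea F q + pd eb F q * lam q + pd ec F q * lam q ^ 2 = 0)
    (v : ℝ × ℝ × ℝ) :
    pd v (pd ea F) p + (pd v (pd eb F) p * lam p + pd eb F p * pd v lam p)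
      + (pd v (pd ec F) p * lam p ^ 2 + pd ec F p * (2 * lam p * pd v lam p)) = 0 := by
  have hd1 : HasFDerivAt (fun q => pd ea F q + pd eb F q * lam q + pd ec F q * (lam q * lam q))
      (0 : (ℝ × ℝ × ℝ) →L[ℝ] ℝ) p := by
    have he : (fun q => pd ea F q + pd eb F q * lam q + pd ec F q * (lam q * lam q))
        =ᶠ[nhds p] fun _ => (0 : ℝ) := by
      filter_upwards [hU.mem_nhds hp] with q hq
      linear_combination hchar q hq
    exact (hasFDerivAt_const (0:ℝ) p).congr_of_eventuallyEq he
  have hd2 := (((pd_hasFDerivAt hU hp hF ea).add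
      ((pd_hasFDerivAt hU hp hF eb).mul hlam.hasFDerivAt)).add
      ((pd_hasFDerivAt hU hp hF ec).mul (hlam.hasFDerivAt.mul hlam.hasFDerivAt)))
  have h0 := hd1.unique hd2
  have hv := congrArg (fun (L : (ℝ × ℝ × ℝ) →L[ℝ] ℝ) => L v) h0
  simp only [ContinuousLinearMap.zero_apply, ContinuousLinearMap.add_apply,
    ContinuousLinearMap.smul_apply, ContinuousLinearMap.comp_apply,
    ContinuousLinearMap.apply_apply, smul_eq_mul] at hv
  rw [pd2_eq hU hp hF v ea, pd2_eq hU hp hF v eb, pd2_eq hU hp hF v ec]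
  simp only [pd, Pi.mul_apply] at hv ⊢
  linear_combination -hv

private lemma key_identity (hU : IsOpen U) (hp : p ∈ U) (hF : ContDiffOn ℝ 2 F U)
    (hlam : DifferentiableAt ℝ lam p)
    (hchar : ∀ q ∈ U, pd ea F q + pd eb F q * lam q + pd ec F q * lam q ^ 2 = 0) :
    (pd eb F p + 2 * pd ec F p * lam p) *
      (pd ea lam p + lam p * pd eb lam p + lam p ^ 2 * pd ec lam p)
    + (pd ea (pd ea F) p + 2 * pd eb (pd ea F) p * lam p
      + (2 * pd ec (pd ea F) p + pd eb (pd eb F) p) * lam p ^ 2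
      + 2 * pd ec (pd eb F) p * lam p ^ 3 + pd ec (pd ec F) p * lam p ^ 4) = 0 := by
  have Ea := char_deriv hU hp hF hlam hchar ea
  have Eb := char_deriv hU hp hF hlam hchar eb
  have Ec := char_deriv hU hp hF hlam hchar ec
  have s1 := pd_symm hU hp hF ea eb
  have s2 := pd_symm hU hp hF ea ec
  have s3 := pd_symm hU hp hF eb ec
  linear_combination Ea + lam p * Eb + lam p ^ 2 * Ec - lam p * s1 - lam p ^ 2 * s2
    - lam p ^ 3 * s3

open Polynomial in
private lemma quad_dvd_iff {A B C' l1 l2 : ℝ} (hC : C' ≠ 0) (hne : l1 ≠ l2)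
    (hA : A = C' * (l1 * l2)) (hB : B = -C' * (l1 + l2)) (q : ℝ[X]) :
    (C A + C B * X + C C' * X ^ 2) ∣ q ↔ q.eval l1 = 0 ∧ q.eval l2 = 0 := by
  have hS : C A + C B * X + C C' * X ^ 2 = C C' * ((X - C l1) * (X - C l2)) := by
    rw [hA, hB]
    simp only [C_mul, C_neg, C_add]
    ring
  have hu : IsUnit (C C') := isUnit_C.mpr hC.isUnit
  rw [hS, hu.mul_left_dvd]
  constructor
  · rintro ⟨k, hk⟩
    constructor <;> · rw [hk]; simp
  · rintro ⟨e1, e2⟩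
    exact ((isCoprime_X_sub_C_of_isUnit_sub ((sub_ne_zero.mpr hne).isUnit)).mul_dvd
      (dvd_iff_isRoot.mpr e1) (dvd_iff_isRoot.mpr e2))

end aux

open Polynomial in
/-- For a hyperbolic `F` with two distinct characteristic speeds `λ₁ ≠ λ₂`,
Lax's complete exceptionality condition `(λᵢ)_a + λᵢ (λᵢ)_b + λᵢ² (λᵢ)_c = 0` at `p`
(for both `i`) is equivalent to the divisibility of the quartic `S²(F)` by the
quadratic symbol `S(F)` in `ℝ[X]`. -/
theorem complete_exceptionality_iff_symbol_divides
    (U : Set (ℝ × ℝ × ℝ)) (hU : IsOpen U)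
    (F lam₁ lam₂ : ℝ × ℝ × ℝ → ℝ) (p : ℝ × ℝ × ℝ) (hp : p ∈ U)
    (hF : ContDiffOn ℝ 2 F U)
    (hFc : pd ec F p ≠ 0)
    (hlam₁ : DifferentiableAt ℝ lam₁ p) (hlam₂ : DifferentiableAt ℝ lam₂ p)
    (hne : lam₁ p ≠ lam₂ p)
    (hchar₁ : ∀ q ∈ U, pd ea F q + pd eb F q * lam₁ q + pd ec F q * lam₁ q ^ 2 = 0)
    (hchar₂ : ∀ q ∈ U, pd ea F q + pd eb F q * lam₂ q + pd ec F q * lam₂ q ^ 2 = 0) :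
    (pd ea lam₁ p + lam₁ p * pd eb lam₁ p + lam₁ p ^ 2 * pd ec lam₁ p = 0 ∧
     pd ea lam₂ p + lam₂ p * pd eb lam₂ p + lam₂ p ^ 2 * pd ec lam₂ p = 0) ↔
    (C (pd ea F p) + C (pd eb F p) * X + C (pd ec F p) * X ^ 2) ∣
      (C (pd ea (pd ea F) p) + C (2 * pd eb (pd ea F) p) * X +
        C (2 * pd ec (pd ea F) p + pd eb (pd eb F) p) * X ^ 2 +
        C (2 * pd ec (pd eb F) p) * X ^ 3 + C (pd ec (pd ec F) p) * X ^ 4) := by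
  have h1p := hchar₁ p hp
  have h2p := hchar₂ p hp
  have hsub : (lam₁ p - lam₂ p) * (pd eb F p + pd ec F p * (lam₁ p + lam₂ p)) = 0 := by
    linear_combination h1p - h2p
  have hB0 : pd eb F p + pd ec F p * (lam₁ p + lam₂ p) = 0 := by
    rcases mul_eq_zero.mp hsub with h | h
    · exact absurd (sub_eq_zero.mp h) hne
    · exact h
  have hB : pd eb F p = -pd ec F p * (lam₁ p + lam₂ p) := by linarith
  have hA : pd ea F p = pd ec F p * (lam₁ p * lam₂ p) := by
    linear_combination h1p - lam₁ p * hB0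
  have key₁ := key_identity hU hp hF hlam₁ hchar₁
  have key₂ := key_identity hU hp hF hlam₂ hchar₂
  have hnz₁ : pd eb F p + 2 * pd ec F p * lam₁ p ≠ 0 := by
    have h : pd eb F p + 2 * pd ec F p * lam₁ p = pd ec F p * (lam₁ p - lam₂ p) := by
      linear_combination hB0
    rw [h]; exact mul_ne_zero hFc (sub_ne_zero.mpr hne)
  have hnz₂ : pd eb F p + 2 * pd ec F p * lam₂ p ≠ 0 := by
    have h : pd eb F p + 2 * pd ec F p * lam₂ p = pd ec F p * (lam₂ p - lam₁ p) := by
      linear_combination hB0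
    rw [h]; exact mul_ne_zero hFc (sub_ne_zero.mpr hne.symm)
  rw [quad_dvd_iff hFc hne hA hB]
  simp only [eval_add, eval_mul, eval_pow, eval_C, eval_X]
  constructor
  · rintro ⟨e1, e2⟩
    constructor
    · linear_combination key₁ - (pd eb F p + 2 * pd ec F p * lam₁ p) * e1
    · linear_combination key₂ - (pd eb F p + 2 * pd ec F p * lam₂ p) * e2
  · rintro ⟨e1, e2⟩
    constructor
    · have hL : (pd eb F p + 2 * pd ec F p * lam₁ p) *
          (pd ea lam₁ p + lam₁ p * pd eb lam₁ p + lam₁ p ^ 2 * pd ec lam₁ p) = 0 := by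
        linear_combination key₁ - e1
      exact (mul_eq_zero.mp hL).resolve_left hnz₁
    · have hL : (pd eb F p + 2 * pd ec F p * lam₂ p) *
          (pd ea lam₂ p + lam₂ p * pd eb lam₂ p + lam₂ p ^ 2 * pd ec lam₂ p) = 0 := by
        linear_combination key₂ - e2
      exact (mul_eq_zero.mp hL).resolve_left hnz₂
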